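/- Let A and B be nonempty closed convex subsets of X, fix x ∈ X, and define b₀ := x, a_{n+1} := P_A(b_n), b_{n+1} := P_B(a_{n+1}) for all n ∈ ℕ. Then for every n ∈ ℕ, the increment b_{n+1} − b_n belongs to ((rec A) ∩ (rec B))^⊕. -/

import Mathlib

open Filter Topology

variable {X : Type*} [NormedAddCommGroup X] [InnerProductSpace ℝ X] [FiniteDimensional ℝ X]

/-- `P` is the projector onto the set `C`: `P x` is a point of `C` nearest to `x`. -/
def IsProjector (C : Set X) (P : X → X) : Prop :=
  ∀ x : X, P x ∈ C ∧ ∀ y ∈ C, ‖x - P x‖ ≤ ‖x - y‖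

/-- The recession cone `rec S = {x : x + S ⊆ S}` of a set `S`. -/
def recCone (S : Set X) : Set X := {x : X | ∀ s ∈ S, x + s ∈ S}

/-- `S^⊕ = −(S^⊖) = {x : ⟪x, s⟫ ≥ 0 for all s ∈ S}`. -/
def plusCone (S : Set X) : Set X := {x : X | ∀ s ∈ S, (0 : ℝ) ≤ inner ℝ x s}

/-- Variational inequality for a nearest point of a convex set. -/
lemma proj_inner_le {C : Set X} (hC : Convex ℝ C) {p x : X} (hp : p ∈ C)
    (hmin : ∀ y ∈ C, ‖x - p‖ ≤ ‖x - y‖) :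
    ∀ y ∈ C, (inner ℝ (x - p) (y - p) : ℝ) ≤ 0 := by
  intro y hy
  set u := x - p
  set v := y - p
  have key : ∀ t : ℝ, 0 < t → t ≤ 1 → 2 * (inner ℝ u v : ℝ) ≤ t * ‖v‖ ^ 2 := by
    intro t ht0 ht1
    have hz : p + t • v ∈ C := by
      have := hC hp hy (a := 1 - t) (b := t) (by linarith) ht0.le (by ring)
      convert this using 1
      simp only [v]
      module
    have h1 : ‖x - p‖ ≤ ‖x - (p + t • v)‖ := hmin _ hz
    have h2 : ‖u‖ ^ 2 ≤ ‖u - t • v‖ ^ 2 := by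
      have : x - (p + t • v) = u - t • v := by simp only [u, v]; abel
      rw [this] at h1
      exact pow_le_pow_left₀ (norm_nonneg _) h1 2
    have h3 : ‖u - t • v‖ ^ 2 = ‖u‖ ^ 2 - 2 * t * (inner ℝ u v : ℝ) + t ^ 2 * ‖v‖ ^ 2 := by
      rw [norm_sub_sq_real, real_inner_smul_right, norm_smul]
      simp [abs_of_pos ht0]
      ring
    rw [h3] at h2
    have h4 : 2 * t * (inner ℝ u v : ℝ) ≤ t ^ 2 * ‖v‖ ^ 2 := by linarith
    have := mul_le_mul_of_nonneg_left h4 (le_of_lt (inv_pos.mpr ht0))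
    calc 2 * (inner ℝ u v : ℝ) = t⁻¹ * (2 * t * (inner ℝ u v : ℝ)) := by
          field_simp
      _ ≤ t⁻¹ * (t ^ 2 * ‖v‖ ^ 2) := this
      _ = t * ‖v‖ ^ 2 := by field_simp
  by_contra h
  push_neg at h
  set c : ℝ := inner ℝ u v
  have hK : (0 : ℝ) ≤ ‖v‖ ^ 2 := by positivity
  rcases eq_or_lt_of_le hK with hK0 | hKpos
  · have := key 1 one_pos le_rfl
    rw [← hK0] at this
    linarith
  · set t := min 1 (c / ‖v‖ ^ 2) with ht
    have htpos : 0 < t := lt_min one_pos (div_pos h hKpos)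
    have := key t htpos (min_le_left _ _)
    have h5 : t * ‖v‖ ^ 2 ≤ (c / ‖v‖ ^ 2) * ‖v‖ ^ 2 :=
      mul_le_mul_of_nonneg_right (min_le_right _ _) hK
    rw [div_mul_cancel₀ _ (ne_of_gt hKpos)] at h5
    linarith

/-- For the alternating projection sequences `b₀ = x`,
`a_{n+1} = P_A b_n`, `b_{n+1} = P_B a_{n+1}`, every increment `b_{n+1} − b_n`
lies in `((rec A) ∩ (rec B))^⊕`. -/
theorem stmt9 (A B : Set X) (hAne : A.Nonempty) (hAcl : IsClosed A) (hAconv : Convex ℝ A)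
    (hBne : B.Nonempty) (hBcl : IsClosed B) (hBconv : Convex ℝ B)
    (PA PB : X → X) (hPA : IsProjector A PA) (hPB : IsProjector B PB)
    (x : X) (a b : ℕ → X) (hb0 : b 0 = x)
    (ha : ∀ n : ℕ, a (n + 1) = PA (b n))
    (hb : ∀ n : ℕ, b (n + 1) = PB (a (n + 1))) :
    ∀ n : ℕ, b (n + 1) - b n ∈ plusCone (recCone A ∩ recCone B) := by
  intro n s hs
  obtain ⟨hsA, hsB⟩ := hs
  -- a (n+1) = PA (b n)
  obtain ⟨haA, haMin⟩ := hPA (b n)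
  obtain ⟨hbB, hbMin⟩ := hPB (a (n + 1))
  rw [← ha n] at haA haMin
  rw [← hb n] at hbB hbMin
  -- inner (b n - a (n+1)) s ≤ 0
  have h1 : (inner ℝ (b n - a (n + 1)) ((s + a (n + 1)) - a (n + 1)) : ℝ) ≤ 0 :=
    proj_inner_le hAconv haA haMin _ (hsA _ haA)
  have h2 : (inner ℝ (a (n + 1) - b (n + 1)) ((s + b (n + 1)) - b (n + 1)) : ℝ) ≤ 0 :=
    proj_inner_le hBconv hbB hbMin _ (hsB _ hbB)
  simp only [add_sub_cancel_right] at h1 h2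
  have e : b (n + 1) - b n = (b (n + 1) - a (n + 1)) + (a (n + 1) - b n) := by abel
  rw [e, inner_add_left]
  have h1' : (0 : ℝ) ≤ inner ℝ (a (n + 1) - b n) s := by
    have : a (n + 1) - b n = -(b n - a (n + 1)) := by abel
    rw [this, inner_neg_left]; linarith
  have h2' : (0 : ℝ) ≤ inner ℝ (b (n + 1) - a (n + 1)) s := by
    have : b (n + 1) - a (n + 1) = -(a (n + 1) - b (n + 1)) := by abel
    rw [this, inner_neg_left]; linarith
  linarith
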